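/- Under the DINO model with true m×k Q-matrix Q and true parameters c, g ∈ [0,1]^m assumed known, suppose Q is complete, c ≇ g, and the attribute distribution p is diversified. For each sample size N let Q̃_N be any measurable choice of a minimizer of Q' ↦ V_{c,g}(Q') over all m×k binary matrices Q'. Then P(Q̃_N ∼ Q) → 1 as N → ∞. Moreover, there is a measurable choice of a column permutation of Q̃_N under which P(Q̃_N = Q) → 1, and for any such choice, any measurable choice p̂_N of a minimizer of p' ↦ |U_{c,g}(Q̃_N) p' − β_N| over probability vectors p' on {0,1}^k satisfies P(|p̂_N − p| > ε) → 0 for every ε > 0. -/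

import Mathlib

open MeasureTheory ProbabilityTheory Matrix Finset Filter

namespace QMatrix

variable {m k : ℕ}

/-- DINA capability indicator. -/
def xiDINA (Q : Fin m → Fin k → Bool) (i : Fin m) (A : Fin k → Bool) : ℝ :=
  if ∀ j, Q i j = true → A j = true then 1 else 0

/-- DINO capability indicator. -/
def xiDINO (Q : Fin m → Fin k → Bool) (i : Fin m) (A : Fin k → Bool) : ℝ :=
  if ∃ j, Q i j = true ∧ A j = true then 1 else 0

/-- Positive response probability under DINA. -/
noncomputable def piDINA (c g : Fin m → ℝ) (Q : Fin m → Fin k → Bool)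
    (i : Fin m) (A : Fin k → Bool) : ℝ :=
  (c i - g i) * xiDINA Q i A + g i

/-- Positive response probability under DINO. -/
noncomputable def piDINO (c g : Fin m → ℝ) (Q : Fin m → Fin k → Bool)
    (i : Fin m) (A : Fin k → Bool) : ℝ :=
  (c i - g i) * xiDINO Q i A + g i

/-- Entry of the saturated T-matrix for the row indexed by `S` and column indexed by `A`. -/
noncomputable def Tent (c g : Fin m → ℝ) (Q : Fin m → Fin k → Bool)
    (S : Finset (Fin m)) (A : Fin k → Bool) : ℝ :=
  ∏ i ∈ S, piDINA c g Q i A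

/-- Entry of the saturated U-matrix for the row indexed by `S` and column indexed by `A`. -/
noncomputable def Uent (c g : Fin m → ℝ) (Q : Fin m → Fin k → Bool)
    (S : Finset (Fin m)) (A : Fin k → Bool) : ℝ :=
  1 - ∏ i ∈ S, (1 - piDINO c g Q i A)

/-- The saturated T-matrix, rows indexed by nonempty subsets of items. -/
noncomputable def Tmat (c g : Fin m → ℝ) (Q : Fin m → Fin k → Bool) :
    Matrix {S : Finset (Fin m) // S.Nonempty} (Fin k → Bool) ℝ :=
  fun S A => Tent c g Q S.1 A

/-- The saturated U-matrix, rows indexed by nonempty subsets of items. -/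
noncomputable def Umat (c g : Fin m → ℝ) (Q : Fin m → Fin k → Bool) :
    Matrix {S : Finset (Fin m) // S.Nonempty} (Fin k → Bool) ℝ :=
  fun S A => Uent c g Q S.1 A

/-- The augmented T-matrix `T̃` (the row indexed by `∅` is the all-ones row). -/
noncomputable def Ttilde (c g : Fin m → ℝ) (Q : Fin m → Fin k → Bool) :
    Matrix (Finset (Fin m)) (Fin k → Bool) ℝ :=
  fun S A => Tent c g Q S A

/-- The augmented U-matrix `Ũ` (the row indexed by `∅` is the all-ones row). -/
noncomputable def Utilde (c g : Fin m → ℝ) (Q : Fin m → Fin k → Bool) :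
    Matrix (Finset (Fin m)) (Fin k → Bool) ℝ :=
  fun S A => if S.Nonempty then Uent c g Q S A else 1

/-- A Q-matrix is complete if each standard basis vector appears among its rows. -/
def Complete (Q : Fin m → Fin k → Bool) : Prop :=
  ∀ j : Fin k, ∃ i : Fin m, ∀ j' : Fin k, Q i j' = decide (j' = j)

/-- `QEquiv Q Q'` : `Q'` is obtained from `Q` by permuting columns (`Q ∼ Q'`). -/
def QEquiv (Q Q' : Fin m → Fin k → Bool) : Prop :=
  ∃ σ : Equiv.Perm (Fin k), ∀ i j, Q' i j = Q i (σ j)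

/-- `c ≇ g` : all coordinates differ. -/
def Ncong (c g : Fin m → ℝ) : Prop := ∀ i, c i ≠ g i

/-- Probability vector on attribute profiles. -/
def ProbVec (p : (Fin k → Bool) → ℝ) : Prop :=
  (∀ A, 0 ≤ p A) ∧ ∑ A, p A = 1

/-- Euclidean norm of a finitely indexed vector. -/
noncomputable def eNorm {ι : Type*} [Fintype ι] (v : ι → ℝ) : ℝ :=
  Real.sqrt (∑ i, v i ^ 2)

/-- pmf of one draw `(A, R)` under the DINA model. -/
noncomputable def dinaPMF (c g : Fin m → ℝ) (Q : Fin m → Fin k → Bool)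
    (p : (Fin k → Bool) → ℝ) (a : Fin k → Bool) (r : Fin m → Bool) : ℝ :=
  p a * ∏ i, (if r i then piDINA c g Q i a else 1 - piDINA c g Q i a)

/-- pmf of one draw `(A, R)` under the DINO model. -/
noncomputable def dinoPMF (c g : Fin m → ℝ) (Q : Fin m → Fin k → Bool)
    (p : (Fin k → Bool) → ℝ) (a : Fin k → Bool) (r : Fin m → Bool) : ℝ :=
  p a * ∏ i, (if r i then piDINO c g Q i a else 1 - piDINO c g Q i a)

/-- The empirical vector `α_N` computed from responses `R 0, …, R (N-1)`. -/
noncomputable def alphaVec (R : ℕ → (Fin m → Bool)) (N : ℕ) :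
    {S : Finset (Fin m) // S.Nonempty} → ℝ :=
  fun S => (∑ r ∈ Finset.range N, ∏ i ∈ S.1, (if R r i then (1:ℝ) else 0)) / N

/-- The empirical vector `β_N` computed from responses `R 0, …, R (N-1)`. -/
noncomputable def betaVec (R : ℕ → (Fin m → Bool)) (N : ℕ) :
    {S : Finset (Fin m) // S.Nonempty} → ℝ :=
  fun S => (∑ r ∈ Finset.range N, (if ∃ i ∈ S.1, R r i = true then (1:ℝ) else 0)) / N

/-- Objective `S_{c,g}(Q') = inf_{p'} |T_{c,g}(Q') p' - α|`. -/
noncomputable def Sobj (c g : Fin m → ℝ) (Q' : Fin m → Fin k → Bool)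
    (α : {S : Finset (Fin m) // S.Nonempty} → ℝ) : ℝ :=
  sInf {x | ∃ p', ProbVec p' ∧ x = eNorm (Tmat c g Q' *ᵥ p' - α)}

/-- Objective `V_{c,g}(Q') = inf_{p'} |U_{c,g}(Q') p' - β|`. -/
noncomputable def Vobj (c g : Fin m → ℝ) (Q' : Fin m → Fin k → Bool)
    (β : {S : Finset (Fin m) // S.Nonempty} → ℝ) : ℝ :=
  sInf {x | ∃ p', ProbVec p' ∧ x = eNorm (Umat c g Q' *ᵥ p' - β)}



section Aux

lemma eNorm_eq_norm {ι : Type*} [Fintype ι] (v : ι → ℝ) :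
    eNorm v = ‖(WithLp.equiv 2 (ι → ℝ)).symm v‖ := by
  rw [EuclideanSpace.norm_eq]
  unfold eNorm
  congr 1
  refine Finset.sum_congr rfl fun i _ => ?_
  rw [Real.norm_eq_abs, sq_abs]; rfl

lemma eNorm_nonneg {ι : Type*} [Fintype ι] (v : ι → ℝ) : 0 ≤ eNorm v :=
  Real.sqrt_nonneg _

lemma eNorm_zero {ι : Type*} [Fintype ι] : eNorm (0 : ι → ℝ) = 0 := by
  simp [eNorm]

lemma eNorm_neg {ι : Type*} [Fintype ι] (v : ι → ℝ) : eNorm (-v) = eNorm v := by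
  simp [eNorm]

lemma eNorm_sub_comm {ι : Type*} [Fintype ι] (v w : ι → ℝ) : eNorm (v - w) = eNorm (w - v) := by
  rw [← eNorm_neg (v - w)]; congr 1; abel

lemma eNorm_eq_zero {ι : Type*} [Fintype ι] {v : ι → ℝ} (h : eNorm v = 0) : v = 0 := by
  rw [eNorm_eq_norm] at h
  have := norm_eq_zero.mp h
  exact congrArg (WithLp.equiv 2 (ι → ℝ)) this

lemma eNorm_triangle {ι : Type*} [Fintype ι] (u v : ι → ℝ) :
    eNorm (u + v) ≤ eNorm u + eNorm v := by
  rw [eNorm_eq_norm, eNorm_eq_norm, eNorm_eq_norm]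
  exact norm_add_le _ _

lemma eNorm_triangle' {ι : Type*} [Fintype ι] (u v w : ι → ℝ) :
    eNorm (u - w) ≤ eNorm (u - v) + eNorm (v - w) := by
  have : u - w = (u - v) + (v - w) := by abel
  rw [this]; exact eNorm_triangle _ _

lemma continuous_eNorm {ι : Type*} [Fintype ι] : Continuous (eNorm (ι := ι)) := by
  unfold eNorm
  exact Real.continuous_sqrt.comp (continuous_finset_sum _ fun i _ => ((continuous_apply i).pow 2))



/-- moment vector of `q` against products of `1 - piDINO`. -/
noncomputable def LL (c g : Fin m → ℝ) (Q : Fin m → Fin k → Bool)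
    (q : (Fin k → Bool) → ℝ) (S : Finset (Fin m)) : ℝ :=
  ∑ A, q A * ∏ i ∈ S, (1 - piDINO c g Q i A)

/-- moment vector of `q` against products of capability indicators. -/
noncomputable def ZZ (Q : Fin m → Fin k → Bool) (q : (Fin k → Bool) → ℝ)
    (S : Finset (Fin m)) : ℝ :=
  ∑ A, q A * ∏ i ∈ S, xiDINO Q i A

lemma xi_prod (Q : Fin m → Fin k → Bool) (A : Fin k → Bool) (S : Finset (Fin m)) :
    ∏ i ∈ S, xiDINO Q i A = if ∀ i ∈ S, ∃ j, Q i j = true ∧ A j = true then 1 else 0 := by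
  classical
  unfold xiDINO
  rw [Finset.prod_boole]
  by_cases h : ∀ i ∈ S, ∃ j, Q i j = true ∧ A j = true
  · rw [if_pos h, if_pos h]
  · rw [if_neg h, if_neg h]

lemma LL_expand (c g : Fin m → ℝ) (Q : Fin m → Fin k → Bool)
    (q : (Fin k → Bool) → ℝ) (S : Finset (Fin m)) :
    LL c g Q q S
      = ∑ T ∈ S.powerset, ((∏ i ∈ T, -(c i - g i)) * ∏ i ∈ S \ T, (1 - g i)) * ZZ Q q T := by
  classical
  unfold LL ZZ
  have h1 : ∀ A, ∏ i ∈ S, (1 - piDINO c g Q i A)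
      = ∑ T ∈ S.powerset, ((∏ i ∈ T, -(c i - g i)) * ∏ i ∈ S \ T, (1 - g i))
          * ∏ i ∈ T, xiDINO Q i A := by
    intro A
    have : ∀ i ∈ S, 1 - piDINO c g Q i A
        = (-(c i - g i)) * xiDINO Q i A + (1 - g i) := by
      intro i _; unfold piDINO; ring
    rw [Finset.prod_congr rfl this, Finset.prod_add]
    refine Finset.sum_congr rfl fun T _ => ?_
    rw [Finset.prod_mul_distrib]
    ring
  calc ∑ A, q A * ∏ i ∈ S, (1 - piDINO c g Q i A)
      = ∑ A, ∑ T ∈ S.powerset,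
          ((∏ i ∈ T, -(c i - g i)) * ∏ i ∈ S \ T, (1 - g i)) * (q A * ∏ i ∈ T, xiDINO Q i A) := by
        refine Finset.sum_congr rfl fun A _ => ?_
        rw [h1, Finset.mul_sum]
        refine Finset.sum_congr rfl fun T _ => by ring
    _ = ∑ T ∈ S.powerset,
          ((∏ i ∈ T, -(c i - g i)) * ∏ i ∈ S \ T, (1 - g i)) * ∑ A, q A * ∏ i ∈ T, xiDINO Q i A := by
        rw [Finset.sum_comm]
        refine Finset.sum_congr rfl fun T _ => ?_
        rw [Finset.mul_sum]

/-- Möbius step: equality of `LL`-moments gives equality of `ZZ`-moments. -/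
lemma ZZ_of_LL {c g : Fin m → ℝ} {Q Q' : Fin m → Fin k → Bool}
    {q q' : (Fin k → Bool) → ℝ} (hd : ∀ i, c i ≠ g i)
    (hLL : ∀ S, LL c g Q' q' S = LL c g Q q S) :
    ∀ S, ZZ Q' q' S = ZZ Q q S := by
  classical
  intro S
  induction S using Finset.strongInduction with
  | _ S ih =>
    have hS := hLL S
    rw [LL_expand, LL_expand] at hS
    have hmem : S ∈ S.powerset := Finset.mem_powerset_self S
    rw [← Finset.add_sum_erase _ _ hmem, ← Finset.add_sum_erase _ _ hmem] at hS
    have heq : ∑ T ∈ S.powerset.erase S,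
        ((∏ i ∈ T, -(c i - g i)) * ∏ i ∈ S \ T, (1 - g i)) * ZZ Q' q' T
        = ∑ T ∈ S.powerset.erase S,
        ((∏ i ∈ T, -(c i - g i)) * ∏ i ∈ S \ T, (1 - g i)) * ZZ Q q T := by
      refine Finset.sum_congr rfl fun T hT => ?_
      have hT' : T ⊂ S := by
        rcases Finset.mem_erase.mp hT with ⟨hne, hss⟩
        exact lt_of_le_of_ne (Finset.mem_powerset.mp hss) hne
      rw [ih T hT']
    rw [heq] at hS
    have hc : (∏ i ∈ S, -(c i - g i)) * ∏ i ∈ S \ S, (1 - g i) ≠ 0 := by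
      rw [Finset.sdiff_self, Finset.prod_empty, mul_one]
      exact Finset.prod_ne_zero_iff.mpr fun i _ => neg_ne_zero.mpr (sub_ne_zero.mpr (hd i))
    have := add_right_cancel hS
    exact mul_left_cancel₀ hc this

/-- set of `true` coordinates of a profile. -/
def tset (A : Fin k → Bool) : Finset (Fin k) := Finset.univ.filter (fun j => A j = true)

lemma tset_inj : Function.Injective (tset (k := k)) := by
  intro A A' h
  funext j
  have h1 : (j ∈ tset A) = (j ∈ tset A') := by rw [h]
  simp only [tset, Finset.mem_filter, Finset.mem_univ, true_and] at h1
  rcases Bool.dichotomy (A j) with hA | hA <;> rcases Bool.dichotomy (A' j) with hA' | hA' <;>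
    simp [hA, hA'] at h1 ⊢

/-- zeta transform of a signed measure on profiles. -/
noncomputable def zet (q : (Fin k → Bool) → ℝ) (J : Finset (Fin k)) : ℝ :=
  ∑ A, q A * ∏ j ∈ J, (if A j = true then (1:ℝ) else 0)

lemma zet_apply (q : (Fin k → Bool) → ℝ) (J : Finset (Fin k)) :
    zet q J = ∑ A ∈ Finset.univ.filter (fun A => J ⊆ tset A), q A := by
  classical
  unfold zet
  rw [Finset.sum_filter]
  refine Finset.sum_congr rfl fun A _ => ?_
  rw [Finset.prod_boole]
  have hiff : (∀ j ∈ J, A j = true) ↔ J ⊆ tset A := by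
    constructor
    · intro hall j hj; simp [tset, hall j hj]
    · intro h j hj; have := h hj; simpa [tset] using this
  by_cases h : J ⊆ tset A
  · rw [if_pos (hiff.mpr h), if_pos h, mul_one]
  · rw [if_neg (fun hh => h (hiff.mp hh)), if_neg h, mul_zero]

lemma zet_injective {q : (Fin k → Bool) → ℝ} (h : ∀ J, zet q J = 0) : ∀ A, q A = 0 := by
  classical
  have key : ∀ A, q A = - ∑ A' ∈ Finset.univ.filter (fun A' => tset A ⊂ tset A'), q A' := by
    intro A
    have h0 := h (tset A)
    rw [zet_apply] at h0
    have hsplit : Finset.univ.filter (fun A' => tset A ⊆ tset A')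
        = insert A (Finset.univ.filter (fun A' => tset A ⊂ tset A')) := by
      ext A'
      simp only [Finset.mem_filter, Finset.mem_univ, true_and, Finset.mem_insert]
      constructor
      · intro hss
        by_cases hA : A' = A
        · exact Or.inl hA
        · right
          exact Finset.ssubset_iff_subset_ne.mpr ⟨hss, fun hh => hA (tset_inj hh.symm)⟩
      · rintro (rfl | hss)
        · exact Finset.Subset.refl _
        · exact hss.subset
    have hnot : A ∉ Finset.univ.filter (fun A' => tset A ⊂ tset A') := by
      simp only [Finset.mem_filter, Finset.mem_univ, true_and]
      exact fun hh => (Finset.ssubset_iff_subset_ne.mp hh).2 rfl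
    rw [hsplit, Finset.sum_insert hnot] at h0
    linarith
  have main : ∀ n : ℕ, ∀ A : Fin k → Bool, k ≤ (tset A).card + n → q A = 0 := by
    intro n
    induction n with
    | zero =>
      intro A hA
      rw [key A]
      rw [Finset.sum_eq_zero, neg_zero]
      intro A' hA'
      have hlt : (tset A).card < (tset A').card :=
        Finset.card_lt_card (by simpa using (Finset.mem_filter.mp hA').2)
      have hle : (tset A').card ≤ k := by
        simpa using Finset.card_le_card (Finset.subset_univ (tset A'))
      omega
    | succ n ihn =>
      intro A hA
      rw [key A]
      rw [Finset.sum_eq_zero, neg_zero]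
      intro A' hA'
      have hlt : (tset A).card < (tset A').card :=
        Finset.card_lt_card (by simpa using (Finset.mem_filter.mp hA').2)
      exact ihn A' (by omega)
  intro A
  exact main k A (by omega)

lemma zet_ext {q q' : (Fin k → Bool) → ℝ} (h : ∀ J, zet q J = zet q' J) : q = q' := by
  funext A
  have : ∀ J, zet (fun B => q B - q' B) J = 0 := by
    intro J
    unfold zet at h ⊢
    have := h J
    simp only [sub_mul]
    rw [Finset.sum_sub_distrib, this, sub_self]
  have := zet_injective this A
  linarith



end Aux

section Ident
variable {m k : ℕ}

lemma ind_eq_ind {P R : Prop} [Decidable P] [Decidable R]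
    (h : (if P then (1:ℝ) else 0) = if R then 1 else 0) : P ↔ R := by
  by_cases hP : P <;> by_cases hR : R <;> simp [hP, hR] at h ⊢

lemma U_mulVec_eq_LL (c g : Fin m → ℝ) (Q : Fin m → Fin k → Bool)
    (q : (Fin k → Bool) → ℝ) (hq : ∑ A, q A = 1) (S : {S : Finset (Fin m) // S.Nonempty}) :
    (Umat c g Q *ᵥ q) S = 1 - LL c g Q q S.1 := by
  unfold Umat Uent Matrix.mulVec dotProduct LL
  have h1 : ∑ A, (1 - ∏ i ∈ S.1, (1 - piDINO c g Q i A)) * q A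
      = ∑ A, (q A - q A * ∏ i ∈ S.1, (1 - piDINO c g Q i A)) :=
    Finset.sum_congr rfl fun A _ => by ring
  rw [h1, Finset.sum_sub_distrib, hq]

lemma xi_prod_insert (Qm : Fin m → Fin k → Bool) (i : Fin m) (S : Finset (Fin m))
    (A : Fin k → Bool) :
    ∏ i' ∈ insert i S, xiDINO Qm i' A = xiDINO Qm i A * ∏ i' ∈ S, xiDINO Qm i' A := by
  classical
  rw [xi_prod, xi_prod]
  unfold xiDINO
  by_cases h1 : ∃ j, Qm i j = true ∧ A j = true <;>
    by_cases h2 : ∀ i' ∈ S, ∃ j, Qm i' j = true ∧ A j = true <;>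
    simp [Finset.forall_mem_insert, h1, h2]

/-- Main identifiability lemma for the DINO model with known `c, g`. -/
lemma ident (Q Q' : Fin m → Fin k → Bool) (c g : Fin m → ℝ) (p p' : (Fin k → Bool) → ℝ)
    (hcg : Ncong c g) (hQcomp : Complete Q) (hp : ProbVec p) (hdiv : ∀ A, 0 < p A)
    (hp' : ProbVec p')
    (hU : Umat c g Q' *ᵥ p' = Umat c g Q *ᵥ p) :
    ∃ σ : Equiv.Perm (Fin k), (∀ i j, Q' i j = Q i (σ j)) ∧
      (∀ A, p' A = p (fun j => A (σ.symm j))) := by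
  classical
  have hLL : ∀ S, LL c g Q' p' S = LL c g Q p S := by
    intro S
    rcases S.eq_empty_or_nonempty with rfl | hS
    · simp only [LL, Finset.prod_empty, mul_one]
      rw [hp.2, hp'.2]
    · have h1 := congrFun hU ⟨S, hS⟩
      rw [U_mulVec_eq_LL _ _ _ _ hp'.2, U_mulVec_eq_LL _ _ _ _ hp.2] at h1
      linarith
  have hZZ := ZZ_of_LL hcg hLL
  choose e he using hQcomp
  have einj : Function.Injective e := by
    intro j j' hjj
    have h1 : Q (e j) j = true := by rw [he j j]; simp
    rw [hjj, he j' j] at h1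
    exact of_decide_eq_true h1
  have hxie : ∀ (j : Fin k) (A : Fin k → Bool),
      xiDINO Q (e j) A = if A j = true then 1 else 0 := by
    intro j A
    unfold xiDINO
    by_cases h : A j = true
    · rw [if_pos ⟨j, by rw [he j j]; simp, h⟩, if_pos h]
    · rw [if_neg, if_neg h]
      rintro ⟨x, hx1, hx2⟩
      rw [he j x] at hx1
      exact h ((of_decide_eq_true hx1) ▸ hx2)
  set Φ : (Fin k → Bool) → (Fin k → Bool) :=
    fun A j => decide (∃ x, Q' (e j) x = true ∧ A x = true) with hΦ
  have hxiΦ : ∀ (j : Fin k) (A : Fin k → Bool),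
      xiDINO Q' (e j) A = if Φ A j = true then 1 else 0 := by
    intro j A
    unfold xiDINO
    by_cases h : ∃ x, Q' (e j) x = true ∧ A x = true
    · rw [if_pos h, if_pos (by simp [hΦ, h])]
    · rw [if_neg h, if_neg (by simp [hΦ, h])]
  -- ZZ over images of complete items, as zeta transforms
  have hZQim : ∀ (q : (Fin k → Bool) → ℝ) (J : Finset (Fin k)),
      ZZ Q q (J.image e) = ∑ A, q A * ∏ j ∈ J, (if A j = true then (1:ℝ) else 0) := by
    intro q J
    unfold ZZ
    refine Finset.sum_congr rfl fun A _ => ?_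
    rw [Finset.prod_image (fun x _ y _ h => einj h)]
    rw [Finset.prod_congr rfl (fun j _ => hxie j A)]
  have hZQ'im : ∀ (q : (Fin k → Bool) → ℝ) (J : Finset (Fin k)),
      ZZ Q' q (J.image e) = ∑ A, q A * ∏ j ∈ J, (if Φ A j = true then (1:ℝ) else 0) := by
    intro q J
    unfold ZZ
    refine Finset.sum_congr rfl fun A _ => ?_
    rw [Finset.prod_image (fun x _ y _ h => einj h)]
    rw [Finset.prod_congr rfl (fun j _ => hxiΦ j A)]
  -- pushforward of p' under Φ equals p
  set pf : (Fin k → Bool) → ℝ :=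
    fun B => ∑ A ∈ Finset.univ.filter (fun A => Φ A = B), p' A with hpfdef
  have hzpf : ∀ J, zet pf J = zet p J := by
    intro J
    have h1 : zet pf J = ∑ A, p' A * ∏ j ∈ J, (if Φ A j = true then (1:ℝ) else 0) := by
      unfold zet
      calc ∑ B, pf B * ∏ j ∈ J, (if B j = true then (1:ℝ) else 0)
          = ∑ B, ∑ A ∈ Finset.univ.filter (fun A => Φ A = B),
              p' A * ∏ j ∈ J, (if Φ A j = true then (1:ℝ) else 0) := by
            refine Finset.sum_congr rfl fun B _ => ?_
            rw [hpfdef, Finset.sum_mul]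
            refine Finset.sum_congr rfl fun A hA => ?_
            rw [(Finset.mem_filter.mp hA).2]
        _ = _ := Finset.sum_fiberwise _ _ _
    rw [h1, ← hZQ'im, hZZ, hZQim]
    rfl
  have hpfeq : pf = p := zet_ext hzpf
  have hexists : ∀ B, ∃ A, Φ A = B ∧ p' A ≠ 0 := by
    intro B
    have hne : ∑ A ∈ Finset.univ.filter (fun A => Φ A = B), p' A ≠ 0 := by
      rw [show ∑ A ∈ Finset.univ.filter (fun A => Φ A = B), p' A = pf B from rfl, hpfeq]
      exact (hdiv B).ne'
    obtain ⟨A, hA, hne'⟩ := Finset.exists_ne_zero_of_sum_ne_zero hne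
    exact ⟨A, (Finset.mem_filter.mp hA).2, hne'⟩
  -- construct τ
  have hpat : ∀ j : Fin k, ∃ A, Φ A = (fun j' => decide (j' = j)) ∧ p' A ≠ 0 :=
    fun j => hexists _
  choose Apat hApat hApat' using hpat
  have hAj : ∀ j, ∃ x, Q' (e j) x = true ∧ Apat j x = true := by
    intro j
    have h1 := congrFun (hApat j) j
    have h2 : Φ (Apat j) j = true := by rw [h1]; simp
    rw [hΦ] at h2
    exact of_decide_eq_true h2
  choose τ hτ1 hτ2 using hAj
  have claim1 : ∀ j j', j' ≠ j → Q' (e j') (τ j) = false := by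
    intro j j' hne
    have h1 := congrFun (hApat j) j'
    simp only [hΦ] at h1
    have h2 : (decide (j' = j) : Bool) = false := decide_eq_false hne
    rw [h2] at h1
    have h3 : ¬ ∃ x, Q' (e j') x = true ∧ Apat j x = true := of_decide_eq_false h1
    by_contra hq
    exact h3 ⟨τ j, by simpa using hq, hτ2 j⟩
  have τinj : Function.Injective τ := by
    intro j j' hjj
    by_contra hne
    have h1 : Q' (e j') (τ j) = true := by rw [hjj]; exact hτ1 j'
    rw [claim1 j j' (fun hh => hne hh.symm)] at h1
    exact Bool.false_ne_true h1
  have τbij : Function.Bijective τ := (Finite.injective_iff_bijective).mp τinj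
  set τe : Equiv.Perm (Fin k) := Equiv.ofBijective τ τbij with hτe
  have rowfact : ∀ j x, Q' (e j) x = true ↔ x = τ j := by
    intro j x
    constructor
    · intro hx
      obtain ⟨j'', rfl⟩ := τbij.2 x
      by_cases hjj : j'' = j
      · rw [hjj]
      · rw [claim1 j'' j (fun hh => hjj hh.symm)] at hx
        exact absurd hx Bool.false_ne_true
    · rintro rfl; exact hτ1 j
  have hΦτ : ∀ A, Φ A = fun j => A (τ j) := by
    intro A
    funext j
    simp only [hΦ]
    rcases Bool.dichotomy (A (τ j)) with hb | hb
    · rw [hb]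
      apply decide_eq_false
      rintro ⟨x, hx1, hx2⟩
      rw [rowfact j x] at hx1
      rw [hx1] at hx2
      rw [hb] at hx2
      exact Bool.false_ne_true hx2
    · rw [hb]
      exact decide_eq_true ⟨τ j, hτ1 j, hb⟩
  -- Φ as an equivalence
  set equivΦ : (Fin k → Bool) ≃ (Fin k → Bool) :=
    Equiv.arrowCongr τe.symm (Equiv.refl Bool) with hequivΦ
  have hΦeq : ∀ A, Φ A = equivΦ A := by
    intro A
    rw [hΦτ A]
    rfl
  -- p' in terms of p
  have hfilt : ∀ A, Finset.univ.filter (fun A' => Φ A' = Φ A) = {A} := by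
    intro A
    ext A'
    simp only [Finset.mem_filter, Finset.mem_univ, true_and, Finset.mem_singleton]
    constructor
    · intro hh
      have : equivΦ A' = equivΦ A := by rw [← hΦeq, ← hΦeq, hh]
      exact equivΦ.injective this
    · rintro rfl; rfl
  have hp'eq : ∀ A, p' A = p (Φ A) := by
    intro A
    have h1 := congrFun hpfeq (Φ A)
    rw [hpfdef] at h1
    simp only at h1
    rw [hfilt, Finset.sum_singleton] at h1
    exact h1
  -- general item step
  have hxi_all : ∀ (i : Fin m) (A : Fin k → Bool),
      xiDINO Q' i A = xiDINO Q i (Φ A) := by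
    intro i A0
    -- compare zeta transforms of fiber measures
    have hzz : ∀ J : Finset (Fin k),
        zet (fun B => p' (equivΦ.symm B) * xiDINO Q' i (equivΦ.symm B)) J
          = zet (fun B => p B * xiDINO Q i B) J := by
      intro J
      have hL : zet (fun B => p' (equivΦ.symm B) * xiDINO Q' i (equivΦ.symm B)) J
          = ZZ Q' p' (insert i (J.image e)) := by
        unfold ZZ
        rw [Finset.sum_congr rfl (fun A (_ : A ∈ Finset.univ) =>
          congrArg (p' A * ·) (xi_prod_insert Q' i (J.image e) A))]
        unfold zet
        rw [← Equiv.sum_comp equivΦ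
          (fun B => p' (equivΦ.symm B) * xiDINO Q' i (equivΦ.symm B)
            * ∏ j ∈ J, (if B j = true then (1:ℝ) else 0))]
        refine Finset.sum_congr rfl fun A _ => ?_
        rw [Equiv.symm_apply_apply]
        have himg : ∏ i' ∈ J.image e, xiDINO Q' i' A
            = ∏ j ∈ J, (if (equivΦ A) j = true then (1:ℝ) else 0) := by
          rw [Finset.prod_image (fun x _ y _ h => einj h)]
          refine Finset.prod_congr rfl fun j _ => ?_
          rw [hxiΦ j A, hΦeq A]
        rw [himg]
        ring
      have hR : zet (fun B => p B * xiDINO Q i B) J = ZZ Q p (insert i (J.image e)) := by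
        unfold ZZ zet
        refine Finset.sum_congr rfl fun B _ => ?_
        rw [xi_prod_insert Q i (J.image e) B]
        have himg : ∏ i' ∈ J.image e, xiDINO Q i' B
            = ∏ j ∈ J, (if B j = true then (1:ℝ) else 0) := by
          rw [Finset.prod_image (fun x _ y _ h => einj h)]
          exact Finset.prod_congr rfl fun j _ => hxie j B
        rw [himg]
        ring
      rw [hL, hR, hZZ]
    have hfun := zet_ext hzz
    have h1 := congrFun hfun (equivΦ A0)
    simp only [Equiv.symm_apply_apply] at h1
    rw [hp'eq A0, hΦeq A0] at h1
    have hpos : p (equivΦ A0) ≠ 0 := (hdiv _).ne'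
    have h2 : xiDINO Q' i A0 = xiDINO Q i (equivΦ A0) := by
      exact mul_left_cancel₀ hpos h1
    rw [h2, hΦeq A0]
  -- conclude row equality
  refine ⟨τe.symm, ?_, ?_⟩
  · intro i y
    have h1 := hxi_all i (fun x => decide (x = y))
    rw [hΦτ] at h1
    unfold xiDINO at h1
    have h2 : (∃ x, Q' i x = true ∧ decide (x = y) = true)
        ↔ (∃ j, Q i j = true ∧ decide (τ j = y) = true) := ind_eq_ind h1
    have h3 : Q' i y = true ↔ Q i (τe.symm y) = true := by
      constructor
      · intro hy
        obtain ⟨x, hx1, hx2⟩ := h2.mp ⟨y, hy, by simp⟩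
        have hxy : τ x = y := of_decide_eq_true hx2
        have : x = τe.symm y := by
          apply τe.injective
          rw [Equiv.apply_symm_apply]
          exact hxy
        rwa [← this]
      · intro hy
        obtain ⟨x, hx1, hx2⟩ := h2.mpr ⟨τe.symm y, hy, by
          rw [decide_eq_true_eq]
          exact τe.apply_symm_apply y⟩
        have : x = y := of_decide_eq_true hx2
        rwa [this] at hx1
    rcases Bool.dichotomy (Q' i y) with hb | hb <;>
      rcases Bool.dichotomy (Q i (τe.symm y)) with hb' | hb' <;>
      simp [hb, hb'] at h3 ⊢
  · intro A
    rw [hp'eq A, hΦτ A]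
    rfl

end Ident


section Compactness
variable {m k : ℕ}

lemma ident_self (Q : Fin m → Fin k → Bool) (c g : Fin m → ℝ) (p p' : (Fin k → Bool) → ℝ)
    (hcg : Ncong c g) (hQcomp : Complete Q) (hp : ProbVec p) (hdiv : ∀ A, 0 < p A)
    (hp' : ProbVec p') (hU : Umat c g Q *ᵥ p' = Umat c g Q *ᵥ p) : p' = p := by
  obtain ⟨σ, hσ, hpeq⟩ := ident Q Q c g p p' hcg hQcomp hp hdiv hp' hU
  have hid : ∀ j, σ j = j := by
    intro j
    obtain ⟨i, hi⟩ := hQcomp j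
    have h1 : Q i (σ j) = true := by
      rw [← hσ i j, hi j]
      simp
    rw [hi (σ j)] at h1
    exact of_decide_eq_true h1
  have hsymm : ∀ j, σ.symm j = j := by
    intro j
    apply σ.injective
    rw [Equiv.apply_symm_apply, hid j]
  funext A
  rw [hpeq A]
  congr 1
  funext j
  rw [hsymm j]

lemma probVec_isCompact : IsCompact {q : (Fin k → Bool) → ℝ | ProbVec q} := by
  have hsub : {q : (Fin k → Bool) → ℝ | ProbVec q}
      ⊆ Set.pi Set.univ (fun _ : Fin k → Bool => Set.Icc (0:ℝ) 1) := by
    intro q hq A _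
    refine ⟨hq.1 A, ?_⟩
    rw [← hq.2]
    exact Finset.single_le_sum (fun B _ => hq.1 B) (Finset.mem_univ A)
  have hcomp : IsCompact (Set.pi Set.univ fun _ : Fin k → Bool => Set.Icc (0:ℝ) 1) :=
    isCompact_univ_pi fun _ => isCompact_Icc
  have hclosed : IsClosed {q : (Fin k → Bool) → ℝ | ProbVec q} := by
    have h1 : {q : (Fin k → Bool) → ℝ | ProbVec q}
        = (⋂ A, {q : (Fin k → Bool) → ℝ | 0 ≤ q A}) ∩ {q | ∑ A, q A = 1} := by
      ext q
      simp only [Set.mem_setOf_eq, Set.mem_inter_iff, Set.mem_iInter, ProbVec]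
    rw [h1]
    exact IsClosed.inter
      (isClosed_iInter fun A => isClosed_le continuous_const (continuous_apply A))
      (isClosed_eq (continuous_finset_sum _ fun A _ => continuous_apply A) continuous_const)
  exact hcomp.of_isClosed_subset hclosed hsub

lemma continuous_obj {ι : Type*} [Fintype ι] (M : Matrix ι ((Fin k → Bool)) ℝ) (v : ι → ℝ) :
    Continuous (fun q : (Fin k → Bool) → ℝ => eNorm (M *ᵥ q - v)) := by
  apply continuous_eNorm.comp
  apply continuous_pi
  intro i
  have h1 : (fun q : (Fin k → Bool) → ℝ => (M *ᵥ q - v) i)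
      = fun q => (∑ A, M i A * q A) - v i := rfl
  rw [h1]
  exact (continuous_finset_sum _ fun A _ =>
    (continuous_const.mul (continuous_apply A))).sub continuous_const

lemma exists_delta (Q : Fin m → Fin k → Bool) (c g : Fin m → ℝ) (p : (Fin k → Bool) → ℝ)
    (hcg : Ncong c g) (hQcomp : Complete Q) (hp : ProbVec p) (hdiv : ∀ A, 0 < p A) :
    ∃ δ > (0:ℝ), ∀ Q' : Fin m → Fin k → Bool, ¬ QEquiv Q Q' →
      ∀ p', ProbVec p' → δ ≤ eNorm (Umat c g Q' *ᵥ p' - Umat c g Q *ᵥ p) := by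
  classical
  have hsep : ∀ Q' : Fin m → Fin k → Bool, ¬ QEquiv Q Q' →
      ∃ δ, 0 < δ ∧ ∀ p', ProbVec p' → δ ≤ eNorm (Umat c g Q' *ᵥ p' - Umat c g Q *ᵥ p) := by
    intro Q' hne
    obtain ⟨q0, hq0, hmin⟩ := probVec_isCompact.exists_isMinOn ⟨p, hp⟩
      (continuous_obj (Umat c g Q') (Umat c g Q *ᵥ p)).continuousOn
    refine ⟨eNorm (Umat c g Q' *ᵥ q0 - Umat c g Q *ᵥ p), ?_,
      fun p' hp' => isMinOn_iff.mp hmin p' hp'⟩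
    rcases lt_or_eq_of_le (eNorm_nonneg (Umat c g Q' *ᵥ q0 - Umat c g Q *ᵥ p)) with h | h
    · exact h
    · exfalso
      have h0 := eNorm_eq_zero h.symm
      have hUeq : Umat c g Q' *ᵥ q0 = Umat c g Q *ᵥ p := sub_eq_zero.mp h0
      obtain ⟨σ, hσ, _⟩ := ident Q Q' c g p q0 hcg hQcomp hp hdiv hq0 hUeq
      exact hne ⟨σ, hσ⟩
  choose! δf hδpos hδle using hsep
  set s : Finset (Fin m → Fin k → Bool) :=
    Finset.univ.filter (fun Q' => ¬ QEquiv Q Q') with hs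
  by_cases hsne : s.Nonempty
  · refine ⟨s.inf' hsne δf, ?_, ?_⟩
    · obtain ⟨Q', hQ', hval⟩ := Finset.exists_mem_eq_inf' hsne δf
      rw [hval]
      exact hδpos Q' ((Finset.mem_filter.mp hQ').2)
    · intro Q' hne p' hp'
      exact le_trans (Finset.inf'_le δf (by simp [hs, hne])) (hδle Q' hne p' hp')
  · refine ⟨1, one_pos, fun Q' hne => absurd ⟨Q', by simp [hs, hne]⟩ hsne⟩

lemma exists_eta (Q : Fin m → Fin k → Bool) (c g : Fin m → ℝ) (p : (Fin k → Bool) → ℝ)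
    (hcg : Ncong c g) (hQcomp : Complete Q) (hp : ProbVec p) (hdiv : ∀ A, 0 < p A)
    (ε : ℝ) (hε : 0 < ε) :
    ∃ η > (0:ℝ), ∀ p', ProbVec p' → ε ≤ eNorm (fun a => p' a - p a) →
      η ≤ eNorm (Umat c g Q *ᵥ p' - Umat c g Q *ᵥ p) := by
  classical
  have hcont2 : Continuous (fun q : (Fin k → Bool) → ℝ => eNorm (fun a => q a - p a)) := by
    apply continuous_eNorm.comp
    apply continuous_pi
    intro a
    exact (continuous_apply a).sub continuous_const
  set K := {q : (Fin k → Bool) → ℝ | ProbVec q ∧ ε ≤ eNorm (fun a => q a - p a)} with hK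
  have hKeq : K = {q : (Fin k → Bool) → ℝ | ProbVec q}
      ∩ {q | ε ≤ eNorm (fun a => q a - p a)} := rfl
  have hKcomp : IsCompact K := by
    rw [hKeq]
    exact probVec_isCompact.inter_right (isClosed_le continuous_const hcont2)
  by_cases hne : K.Nonempty
  · obtain ⟨q0, hq0, hmin⟩ := hKcomp.exists_isMinOn hne
      (continuous_obj (Umat c g Q) (Umat c g Q *ᵥ p)).continuousOn
    refine ⟨eNorm (Umat c g Q *ᵥ q0 - Umat c g Q *ᵥ p), ?_,
      fun p' h1 h2 => isMinOn_iff.mp hmin p' ⟨h1, h2⟩⟩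
    rcases lt_or_eq_of_le (eNorm_nonneg (Umat c g Q *ᵥ q0 - Umat c g Q *ᵥ p)) with h | h
    · exact h
    · exfalso
      have h0 := eNorm_eq_zero h.symm
      have hUeq : Umat c g Q *ᵥ q0 = Umat c g Q *ᵥ p := sub_eq_zero.mp h0
      have hq0p : q0 = p := ident_self Q c g p q0 hcg hQcomp hp hdiv hq0.1 hUeq
      have h2 := hq0.2
      rw [hq0p] at h2
      have h3 : (fun a => p a - p a) = (0 : (Fin k → Bool) → ℝ) := by
        funext a; simp
      rw [h3, eNorm_zero] at h2
      linarith
  · exact ⟨1, one_pos, fun p' h1 h2 => absurd ⟨p', h1, h2⟩ hne⟩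

lemma Vobj_le (c g : Fin m → ℝ) (Q' : Fin m → Fin k → Bool)
    (β : {S : Finset (Fin m) // S.Nonempty} → ℝ) (p0 : (Fin k → Bool) → ℝ)
    (hp0 : ProbVec p0) :
    Vobj c g Q' β ≤ eNorm (Umat c g Q' *ᵥ p0 - β) := by
  apply csInf_le
  · refine ⟨0, ?_⟩
    rintro x ⟨p', _, rfl⟩
    exact eNorm_nonneg _
  · exact ⟨p0, hp0, rfl⟩

lemma le_Vobj (c g : Fin m → ℝ) (Q' : Fin m → Fin k → Bool)
    (β : {S : Finset (Fin m) // S.Nonempty} → ℝ) (x : ℝ) (p0 : (Fin k → Bool) → ℝ)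
    (hp0 : ProbVec p0)
    (h : ∀ p', ProbVec p' → x ≤ eNorm (Umat c g Q' *ᵥ p' - β)) :
    x ≤ Vobj c g Q' β := by
  refine le_csInf ⟨eNorm (Umat c g Q' *ᵥ p0 - β), p0, hp0, rfl⟩ ?_
  rintro y ⟨p', hp', rfl⟩
  exact h p' hp'

end Compactness


section Probability
variable {m k : ℕ}

lemma fin_measure_ext {γ : Type*} [Fintype γ] [MeasurableSpace γ] [MeasurableSingletonClass γ]
    (μ ν : Measure γ) (h : ∀ x, μ {x} = ν {x}) : μ = ν := by
  classical
  refine Measure.ext fun s _ => ?_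
  have hs : s = ⋃ x ∈ (Set.toFinite s).toFinset, ({x} : Set γ) := by
    ext y
    simp only [Set.mem_iUnion, Set.Finite.mem_toFinset, Set.mem_singleton_iff]
    constructor
    · intro hy; exact ⟨y, hy, rfl⟩
    · rintro ⟨x, hx, rfl⟩; exact hx
  have hdisj : ((Set.toFinite s).toFinset : Set γ).PairwiseDisjoint (fun x => ({x} : Set γ)) :=
    fun x _ y _ hxy => Set.disjoint_singleton.mpr hxy
  rw [hs, measure_biUnion_finset hdisj (fun x _ => measurableSet_singleton x),
    measure_biUnion_finset hdisj (fun x _ => measurableSet_singleton x)]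
  exact Finset.sum_congr rfl fun x _ => h x

lemma piDINO_mem (c g : Fin m → ℝ) (Q : Fin m → Fin k → Bool) (i : Fin m) (A : Fin k → Bool)
    (hc : c i ∈ Set.Icc (0:ℝ) 1) (hg : g i ∈ Set.Icc (0:ℝ) 1) :
    piDINO c g Q i A ∈ Set.Icc (0:ℝ) 1 := by
  unfold piDINO xiDINO
  split
  · have h1 : (c i - g i) * 1 + g i = c i := by ring
    rw [h1]; exact hc
  · have h1 : (c i - g i) * 0 + g i = g i := by ring
    rw [h1]; exact hg

lemma dinoPMF_nonneg (c g : Fin m → ℝ) (Q : Fin m → Fin k → Bool) (p : (Fin k → Bool) → ℝ)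
    (hc : ∀ i, c i ∈ Set.Icc (0:ℝ) 1) (hg : ∀ i, g i ∈ Set.Icc (0:ℝ) 1)
    (hp : ∀ A, 0 ≤ p A) (a : Fin k → Bool) (r : Fin m → Bool) :
    0 ≤ dinoPMF c g Q p a r := by
  unfold dinoPMF
  apply mul_nonneg (hp a)
  apply Finset.prod_nonneg
  intro i _
  rcases piDINO_mem c g Q i a (hc i) (hg i) with ⟨h0, h1⟩
  split
  · exact h0
  · linarith

/-- The inner sum over response patterns. -/
lemma sum_resp (c g : Fin m → ℝ) (Q : Fin m → Fin k → Bool) (a : Fin k → Bool)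
    (S : Finset (Fin m)) :
    ∑ r : Fin m → Bool, (if ∃ i ∈ S, r i = true then (1:ℝ) else 0)
        * ∏ i, (if r i then piDINO c g Q i a else 1 - piDINO c g Q i a)
      = 1 - ∏ i ∈ S, (1 - piDINO c g Q i a) := by
  classical
  set w : Fin m → Bool → ℝ :=
    fun i b => if b then piDINO c g Q i a else 1 - piDINO c g Q i a with hw
  have hsplit : ∀ r : Fin m → Bool,
      (if ∃ i ∈ S, r i = true then (1:ℝ) else 0) * ∏ i, w i (r i)
        = ∏ i, w i (r i) - (if ∀ i ∈ S, r i = false then (1:ℝ) else 0) * ∏ i, w i (r i) := by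
    intro r
    by_cases h : ∃ i ∈ S, r i = true
    · have h2 : ¬ ∀ i ∈ S, r i = false := by
        rintro hall
        obtain ⟨i, hi, hri⟩ := h
        rw [hall i hi] at hri
        exact Bool.false_ne_true hri
      rw [if_pos h, if_neg h2]; ring
    · have h2 : ∀ i ∈ S, r i = false := by
        intro i hi
        rcases Bool.dichotomy (r i) with hb | hb
        · exact hb
        · exact absurd ⟨i, hi, hb⟩ h
      rw [if_neg h, if_pos h2]; ring
  rw [Finset.sum_congr rfl fun r _ => hsplit r, Finset.sum_sub_distrib]
  have hsum1 : ∑ r : Fin m → Bool, ∏ i, w i (r i) = 1 := by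
    rw [← Fintype.prod_sum w]
    have : ∀ i : Fin m, ∑ b : Bool, w i b = 1 := by
      intro i
      rw [Fintype.sum_bool]
      simp only [hw]
      rw [if_pos trivial, if_neg Bool.false_ne_true]
      ring
    rw [Finset.prod_congr rfl fun i _ => this i, Finset.prod_const_one]
  have hsum2 : ∑ r : Fin m → Bool, (if ∀ i ∈ S, r i = false then (1:ℝ) else 0) * ∏ i, w i (r i)
      = ∏ i ∈ S, (1 - piDINO c g Q i a) := by
    set u : Fin m → Bool → ℝ :=
      fun i b => w i b * (if i ∈ S then (if b = false then 1 else 0) else 1) with hu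
    have hind : ∀ r : Fin m → Bool,
        (if ∀ i ∈ S, r i = false then (1:ℝ) else 0) * ∏ i, w i (r i) = ∏ i, u i (r i) := by
      intro r
      have h1 : (if ∀ i ∈ S, r i = false then (1:ℝ) else 0)
          = ∏ i ∈ S, (if r i = false then (1:ℝ) else 0) := by
        rw [Finset.prod_boole]
        by_cases h : ∀ i ∈ S, r i = false
        · rw [if_pos h, if_pos h]
        · rw [if_neg h, if_neg h]
      have h2 : ∏ i ∈ S, (if r i = false then (1:ℝ) else 0)
          = ∏ i : Fin m, (if i ∈ S then (if r i = false then (1:ℝ) else 0) else 1) := by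
        rw [Finset.prod_ite_mem Finset.univ S (fun i => if r i = false then (1:ℝ) else 0),
          Finset.univ_inter]
      rw [h1, h2, ← Finset.prod_mul_distrib]
      refine Finset.prod_congr rfl fun i _ => ?_
      rw [hu]
      ring
    rw [Finset.sum_congr rfl fun r _ => hind r, ← Fintype.prod_sum u]
    have h3 : ∀ i : Fin m, ∑ b : Bool, u i b
        = if i ∈ S then 1 - piDINO c g Q i a else 1 := by
      intro i
      rw [Fintype.sum_bool]
      by_cases h : i ∈ S <;> simp [hu, hw, h] <;> ring
    rw [Finset.prod_congr rfl fun i _ => h3 i,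
      Finset.prod_ite_mem Finset.univ S (fun i => 1 - piDINO c g Q i a), Finset.univ_inter]
  rw [hsum1, hsum2]

lemma sum_pmf_eq (c g : Fin m → ℝ) (Q : Fin m → Fin k → Bool) (p : (Fin k → Bool) → ℝ)
    (S : {S : Finset (Fin m) // S.Nonempty}) :
    ∑ x ∈ Finset.univ.filter
        (fun x : (Fin k → Bool) × (Fin m → Bool) => ∃ i ∈ S.1, x.2 i = true),
        dinoPMF c g Q p x.1 x.2
      = (Umat c g Q *ᵥ p) S := by
  classical
  rw [Finset.sum_filter]
  rw [Fintype.sum_prod_type]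
  have h1 : ∀ a : Fin k → Bool,
      (∑ r : Fin m → Bool, if ∃ i ∈ S.1, r i = true then dinoPMF c g Q p a r else 0)
        = p a * (1 - ∏ i ∈ S.1, (1 - piDINO c g Q i a)) := by
    intro a
    have h2 : ∀ r : Fin m → Bool,
        (if ∃ i ∈ S.1, r i = true then dinoPMF c g Q p a r else 0)
          = p a * ((if ∃ i ∈ S.1, r i = true then (1:ℝ) else 0)
              * ∏ i, (if r i then piDINO c g Q i a else 1 - piDINO c g Q i a)) := by
      intro r
      unfold dinoPMF
      by_cases h : ∃ i ∈ S.1, r i = true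
      · rw [if_pos h, if_pos h]; ring
      · rw [if_neg h, if_neg h]; ring
    rw [Finset.sum_congr rfl fun r _ => h2 r, ← Finset.mul_sum, sum_resp]
  rw [Finset.sum_congr rfl fun a _ => h1 a]
  unfold Umat Uent Matrix.mulVec dotProduct
  exact Finset.sum_congr rfl fun a _ => by ring

/-- Almost-sure convergence of the empirical beta vector. -/
lemma beta_tendsto
    {Ω : Type*} [MeasurableSpace Ω] (P : Measure Ω) [IsProbabilityMeasure P]
    (Q : Fin m → Fin k → Bool) (c g : Fin m → ℝ) (p : (Fin k → Bool) → ℝ)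
    (hc : ∀ i, c i ∈ Set.Icc (0:ℝ) 1) (hg : ∀ i, g i ∈ Set.Icc (0:ℝ) 1)
    (hp : ProbVec p)
    (A : ℕ → Ω → (Fin k → Bool)) (R : ℕ → Ω → (Fin m → Bool))
    (hmeas : ∀ n, Measurable (fun ω => (A n ω, R n ω)))
    (hindep : iIndepFun (fun n ω => (A n ω, R n ω)) P)
    (hdist : ∀ (n : ℕ) (a : Fin k → Bool) (r : Fin m → Bool),
      P {ω | A n ω = a ∧ R n ω = r} = ENNReal.ofReal (dinoPMF c g Q p a r)) :
    ∀ᵐ ω ∂P, ∀ S : {S : Finset (Fin m) // S.Nonempty},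
      Tendsto (fun N => betaVec (fun r => R r ω) N S) atTop (nhds ((Umat c g Q *ᵥ p) S)) := by
  classical
  rw [ae_all_iff]
  intro S
  set φ : (Fin k → Bool) × (Fin m → Bool) → ℝ :=
    fun x => if ∃ i ∈ S.1, x.2 i = true then 1 else 0 with hφ
  have hφmeas : Measurable φ := measurable_of_countable φ
  set Y : ℕ → Ω → ℝ := fun n => φ ∘ (fun ω => (A n ω, R n ω)) with hY
  have hYmeas : ∀ n, Measurable (Y n) := fun n => hφmeas.comp (hmeas n)
  have hmap : ∀ n, Measure.map (fun ω => (A n ω, R n ω)) P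
      = Measure.map (fun ω => (A 0 ω, R 0 ω)) P := by
    intro n
    apply fin_measure_ext
    intro x
    rw [Measure.map_apply (hmeas n) (measurableSet_singleton x),
      Measure.map_apply (hmeas 0) (measurableSet_singleton x)]
    have hpre : ∀ nn : ℕ, (fun ω => (A nn ω, R nn ω)) ⁻¹' {x}
        = {ω | A nn ω = x.1 ∧ R nn ω = x.2} := by
      intro nn; ext ω; simp [Prod.ext_iff]
    rw [hpre n, hpre 0, hdist n x.1 x.2, hdist 0 x.1 x.2]
  have hident : ∀ n, IdentDistrib (Y n) (Y 0) P P := by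
    intro n
    exact IdentDistrib.comp ⟨(hmeas n).aemeasurable, (hmeas 0).aemeasurable, hmap n⟩ hφmeas
  have hYindep : Pairwise (Function.onFun (IndepFun · · P) Y) := by
    have h1 := hindep.comp (fun _ => φ) (fun _ => hφmeas)
    exact fun i j hij => h1.indepFun hij
  have hint : Integrable (Y 0) P := by
    refine (integrable_const (1:ℝ)).mono' ((hYmeas 0).aestronglyMeasurable) ?_
    refine Filter.Eventually.of_forall fun ω => ?_
    simp only [hY, hφ, Function.comp]
    split <;> simp
  have hslln := strong_law_ae_real Y hint hYindep hident
  -- identify the limit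
  have hE : P[Y 0] = (Umat c g Q *ᵥ p) S := by
    set E : Set Ω := {ω | ∃ i ∈ S.1, R 0 ω i = true} with hEdef
    have hEpre : E = (fun ω => (A 0 ω, R 0 ω)) ⁻¹'
        {x : (Fin k → Bool) × (Fin m → Bool) | ∃ i ∈ S.1, x.2 i = true} := rfl
    have hEmeas : MeasurableSet E := by
      rw [hEpre]
      exact hmeas 0 ((Set.toFinite _).measurableSet)
    have hYind : Y 0 = E.indicator (fun _ => (1:ℝ)) := by
      funext ω
      by_cases h : ∃ i ∈ S.1, R 0 ω i = true
      · rw [Set.indicator_of_mem (show ω ∈ E from h)]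
        simp only [hY, hφ, Function.comp_apply]
        rw [if_pos h]
      · rw [Set.indicator_of_notMem (show ω ∉ E from h)]
        simp only [hY, hφ, Function.comp_apply]
        rw [if_neg h]
    have hPE : P E = ENNReal.ofReal ((Umat c g Q *ᵥ p) S) := by
      set F : Finset ((Fin k → Bool) × (Fin m → Bool)) :=
        Finset.univ.filter (fun x => ∃ i ∈ S.1, x.2 i = true) with hF
      have hEun : E = ⋃ x ∈ F, {ω | A 0 ω = x.1 ∧ R 0 ω = x.2} := by
        ext ω
        simp only [hEdef, Set.mem_setOf_eq, Set.mem_iUnion, hF, Finset.mem_filter,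
          Finset.mem_univ, true_and]
        constructor
        · intro h
          exact ⟨(A 0 ω, R 0 ω), h, rfl, rfl⟩
        · rintro ⟨x, hx, h1, h2⟩
          rw [← h2] at hx
          exact hx
      have hdisj : (F : Set ((Fin k → Bool) × (Fin m → Bool))).PairwiseDisjoint
          (fun x => {ω | A 0 ω = x.1 ∧ R 0 ω = x.2}) := by
        intro x _ y _ hxy
        refine Set.disjoint_left.mpr ?_
        rintro ω ⟨h1, h2⟩ ⟨h3, h4⟩
        exact hxy (Prod.ext (h1 ▸ h3.symm) (h2 ▸ h4.symm)).symm
      have hmeasx : ∀ x ∈ F, MeasurableSet {ω | A 0 ω = x.1 ∧ R 0 ω = x.2} := by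
        intro x _
        have : {ω | A 0 ω = x.1 ∧ R 0 ω = x.2}
            = (fun ω => (A 0 ω, R 0 ω)) ⁻¹' {x} := by
          ext ω; simp [Prod.ext_iff]
        rw [this]
        exact hmeas 0 (measurableSet_singleton x)
      rw [hEun, measure_biUnion_finset hdisj hmeasx]
      have h1 : ∀ x ∈ F, P {ω | A 0 ω = x.1 ∧ R 0 ω = x.2}
          = ENNReal.ofReal (dinoPMF c g Q p x.1 x.2) := fun x _ => hdist 0 x.1 x.2
      rw [Finset.sum_congr rfl h1,
        ← ENNReal.ofReal_sum_of_nonneg (fun x _ => dinoPMF_nonneg c g Q p hc hg hp.1 x.1 x.2)]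
      rw [hF, sum_pmf_eq]
    have hnn : 0 ≤ (Umat c g Q *ᵥ p) S := by
      rw [← sum_pmf_eq c g Q p S]
      exact Finset.sum_nonneg fun x _ => dinoPMF_nonneg c g Q p hc hg hp.1 x.1 x.2
    calc P[Y 0] = ∫ ω, E.indicator (fun _ => (1:ℝ)) ω ∂P := by rw [hYind]
      _ = (P E).toReal := by
          rw [show (fun _ : Ω => (1:ℝ)) = (1 : Ω → ℝ) from rfl]
          exact integral_indicator_one hEmeas
      _ = (Umat c g Q *ᵥ p) S := by rw [hPE, ENNReal.toReal_ofReal hnn]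
  rw [hE] at hslln
  filter_upwards [hslln] with ω hω
  have hbeq : ∀ N : ℕ, betaVec (fun r => R r ω) N S = (∑ i ∈ Finset.range N, Y i ω) / N := by
    intro N
    unfold betaVec
    congr 1
  simpa only [hbeq] using hω

end Probability


lemma qequiv_refl (Q1 : Fin m → Fin k → Bool) : QEquiv Q1 Q1 :=
  ⟨Equiv.refl _, fun _ _ => rfl⟩

lemma qequiv_symm {Q1 Q2 : Fin m → Fin k → Bool} (h : QEquiv Q1 Q2) : QEquiv Q2 Q1 := by
  obtain ⟨σ, hσ⟩ := h
  refine ⟨σ.symm, fun i j => ?_⟩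
  rw [hσ i (σ.symm j), Equiv.apply_symm_apply]

/-- Theorem 3 (DINO, `c` and `g` known): consistency of the Q-matrix estimator and
of the attribute-distribution estimator. -/
theorem dino_known_cg_consistency
    {Ω : Type*} [MeasurableSpace Ω] (P : Measure Ω) [IsProbabilityMeasure P]
    (Q : Fin m → Fin k → Bool) (c g : Fin m → ℝ) (p : (Fin k → Bool) → ℝ)
    (hc : ∀ i, c i ∈ Set.Icc (0:ℝ) 1) (hg : ∀ i, g i ∈ Set.Icc (0:ℝ) 1)
    (hQcomp : Complete Q) (hcg : Ncong c g) (hp : ProbVec p) (hdiv : ∀ A, 0 < p A)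
    -- the i.i.d. sample from the DINO model; only the responses `R` are observed
    (A : ℕ → Ω → (Fin k → Bool)) (R : ℕ → Ω → (Fin m → Bool))
    (hmeas : ∀ n, Measurable (fun ω => (A n ω, R n ω)))
    (hindep : iIndepFun (fun n ω => (A n ω, R n ω)) P)
    (hdist : ∀ (n : ℕ) (a : Fin k → Bool) (r : Fin m → Bool),
      P {ω | A n ω = a ∧ R n ω = r} = ENNReal.ofReal (dinoPMF c g Q p a r))
    -- a measurable choice of minimizer of `Q' ↦ S_{c,g}(Q')`
    (Qhat : ℕ → Ω → (Fin m → Fin k → Bool))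
    (hQhatMeas : ∀ N, Measurable (Qhat N))
    (hQhatMin : ∀ (N : ℕ) (ω : Ω) (Q' : Fin m → Fin k → Bool),
      Vobj c g (Qhat N ω) (betaVec (fun r => R r ω) N) ≤
        Vobj c g Q' (betaVec (fun r => R r ω) N)) :
    -- conclusion 1: P(Q̂_N ∼ Q) → 1
    Tendsto (fun N => P {ω | QEquiv Q (Qhat N ω)}) atTop (nhds 1) ∧
    -- conclusion 2: a measurable column permutation of Q̂_N converging to Q exists
    (∃ Qbar : ℕ → Ω → (Fin m → Fin k → Bool),
      (∀ N, Measurable (Qbar N)) ∧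
      (∀ N ω, QEquiv (Qhat N ω) (Qbar N ω)) ∧
      Tendsto (fun N => P {ω | Qbar N ω = Q}) atTop (nhds 1)) ∧
    -- conclusion 3: for any such choice, any measurable minimizing `p̂_N` is consistent
    (∀ Qbar : ℕ → Ω → (Fin m → Fin k → Bool),
      (∀ N, Measurable (Qbar N)) →
      (∀ N ω, QEquiv (Qhat N ω) (Qbar N ω)) →
      Tendsto (fun N => P {ω | Qbar N ω = Q}) atTop (nhds 1) →
      ∀ phat : ℕ → Ω → ((Fin k → Bool) → ℝ),
        (∀ N, Measurable (phat N)) →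
        (∀ N ω, ProbVec (phat N ω) ∧ ∀ p', ProbVec p' →
          eNorm (Umat c g (Qbar N ω) *ᵥ phat N ω - betaVec (fun r => R r ω) N) ≤
            eNorm (Umat c g (Qbar N ω) *ᵥ p' - betaVec (fun r => R r ω) N)) →
        ∀ ε > (0:ℝ),
          Tendsto (fun N => P {ω | ε < eNorm (fun a => phat N ω a - p a)})
            atTop (nhds 0)) := by
  classical
  obtain ⟨δ, hδpos, hδ⟩ := exists_delta Q c g p hcg hQcomp hp hdiv
  have hae := beta_tendsto P Q c g p hc hg hp A R hmeas hindep hdist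
  set blim : {S : Finset (Fin m) // S.Nonempty} → ℝ := Umat c g Q *ᵥ p with hb
  set G : ℕ → Ω → ℝ := fun N ω => eNorm (blim - betaVec (fun r => R r ω) N) with hG
  -- a.e. convergence of G to 0
  have hGae : ∀ᵐ ω ∂P, Tendsto (fun N => G N ω) atTop (nhds 0) := by
    filter_upwards [hae] with ω hω
    have h1 : Tendsto (fun N => (blim - betaVec (fun r => R r ω) N)) atTop
        (nhds (0 : {S : Finset (Fin m) // S.Nonempty} → ℝ)) := by
      rw [tendsto_pi_nhds]
      intro S
      have h2 : Tendsto (fun N => blim S - betaVec (fun r => R r ω) N S) atTop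
          (nhds (blim S - blim S)) := tendsto_const_nhds.sub (hω S)
      simpa using h2
    have h3 := (continuous_eNorm.tendsto
      (0 : {S : Finset (Fin m) // S.Nonempty} → ℝ)).comp h1
    simpa [eNorm_zero, Function.comp_def] using h3
  -- measurability of G
  have hGmeas : ∀ N, Measurable (G N) := by
    intro N
    have h1 : Measurable (fun ω => blim - betaVec (fun r => R r ω) N) := by
      apply measurable_pi_lambda
      intro S
      apply Measurable.sub measurable_const
      apply Measurable.div_const
      apply Finset.measurable_sum
      intro r _
      have h2 : (fun ω => if ∃ i ∈ S.1, R r ω i = true then (1:ℝ) else 0)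
          = (fun v : Fin m → Bool => if ∃ i ∈ S.1, v i = true then (1:ℝ) else 0)
            ∘ (fun ω => R r ω) := rfl
      rw [h2]
      exact (measurable_of_countable _).comp (measurable_snd.comp (hmeas r))
    exact continuous_eNorm.measurable.comp h1
  -- convergence in probability of G to 0
  have hGim := tendstoInMeasure_of_tendsto_ae
    (f := G) (g := (0 : Ω → ℝ)) (μ := P)
    (fun N => (hGmeas N).aestronglyMeasurable) hGae
  have hGP : ∀ ε : ℝ, 0 < ε → Tendsto (fun N => P {ω | ε ≤ G N ω}) atTop (nhds 0) := by
    intro ε hε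
    have h1 := tendstoInMeasure_iff_dist.mp hGim ε hε
    have hset : ∀ N, {x | ε ≤ dist (G N x) ((0 : Ω → ℝ) x)} = {ω | ε ≤ G N ω} := by
      intro N
      ext ω
      rw [Set.mem_setOf_eq, Set.mem_setOf_eq, Pi.zero_apply, Real.dist_eq, sub_zero,
        abs_of_nonneg (eNorm_nonneg _)]
    simpa only [hset] using h1
  -- inclusion for conclusion 1
  have hincl1 : ∀ N, {ω | ¬ QEquiv Q (Qhat N ω)} ⊆ {ω | δ/2 ≤ G N ω} := by
    intro N ω hω
    simp only [Set.mem_setOf_eq] at hω ⊢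
    by_contra hlt
    push_neg at hlt
    have h1 : Vobj c g (Qhat N ω) (betaVec (fun r => R r ω) N)
        ≤ Vobj c g Q (betaVec (fun r => R r ω) N) := hQhatMin N ω Q
    have h2 : Vobj c g Q (betaVec (fun r => R r ω) N)
        ≤ eNorm (Umat c g Q *ᵥ p - betaVec (fun r => R r ω) N) := Vobj_le c g Q _ p hp
    have h3 : eNorm (Umat c g Q *ᵥ p - betaVec (fun r => R r ω) N) = G N ω := rfl
    have h4 : δ - G N ω ≤ Vobj c g (Qhat N ω) (betaVec (fun r => R r ω) N) := by
      apply le_Vobj c g _ _ _ p hp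
      intro p' hp'
      have h5 : δ ≤ eNorm (Umat c g (Qhat N ω) *ᵥ p' - blim) := hδ (Qhat N ω) hω p' hp'
      have h6 : eNorm (Umat c g (Qhat N ω) *ᵥ p' - blim)
          ≤ eNorm (Umat c g (Qhat N ω) *ᵥ p' - betaVec (fun r => R r ω) N)
            + eNorm (betaVec (fun r => R r ω) N - blim) := eNorm_triangle' _ _ _
      have h7 : eNorm (betaVec (fun r => R r ω) N - blim) = G N ω := eNorm_sub_comm _ _
      linarith
    linarith
  -- measurability of the Q-equivalence event
  have hQm : ∀ N, MeasurableSet {ω | QEquiv Q (Qhat N ω)} := by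
    intro N
    have h1 : {ω | QEquiv Q (Qhat N ω)} = Qhat N ⁻¹' {Q' | QEquiv Q Q'} := rfl
    rw [h1]
    exact hQhatMeas N ((Set.toFinite _).measurableSet)
  -- conclusion 1
  have hcon1 : Tendsto (fun N => P {ω | QEquiv Q (Qhat N ω)}) atTop (nhds 1) := by
    have hub : ∀ N, P {ω | QEquiv Q (Qhat N ω)} ≤ 1 := fun N => prob_le_one
    have hlb : ∀ N, 1 - P {ω | δ/2 ≤ G N ω} ≤ P {ω | QEquiv Q (Qhat N ω)} := by
      intro N
      have hcompl : {ω | QEquiv Q (Qhat N ω)} = {ω | ¬ QEquiv Q (Qhat N ω)}ᶜ := by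
        ext ω; simp
      have hmne : MeasurableSet {ω | ¬ QEquiv Q (Qhat N ω)} := (hQm N).compl
      rw [hcompl, prob_compl_eq_one_sub hmne]
      exact tsub_le_tsub_left (measure_mono (hincl1 N)) 1
    have h0 : Tendsto (fun N => 1 - P {ω | δ/2 ≤ G N ω}) atTop (nhds 1) := by
      have h1 := ENNReal.Tendsto.sub
        (tendsto_const_nhds (x := (1 : ENNReal))) (hGP (δ/2) (by linarith))
        (Or.inl ENNReal.one_ne_top)
      simpa using h1
    exact tendsto_of_tendsto_of_tendsto_of_le_of_le h0 tendsto_const_nhds hlb hub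
  refine ⟨hcon1, ?_, ?_⟩
  · -- conclusion 2
    set f : (Fin m → Fin k → Bool) → (Fin m → Fin k → Bool) :=
      fun Q' => if QEquiv Q Q' then Q else Q' with hf
    refine ⟨fun N ω => f (Qhat N ω), ?_, ?_, ?_⟩
    · exact fun N => (measurable_of_countable f).comp (hQhatMeas N)
    · intro N ω
      by_cases h : QEquiv Q (Qhat N ω)
      · simp only [hf, if_pos h]
        exact qequiv_symm h
      · simp only [hf, if_neg h]
        exact qequiv_refl _
    · have hincl : ∀ N, {ω | QEquiv Q (Qhat N ω)} ⊆ {ω | f (Qhat N ω) = Q} := by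
        intro N ω hω
        simp only [Set.mem_setOf_eq] at hω ⊢
        rw [hf]
        simp only [if_pos hω]
      have hub : ∀ N, P {ω | f (Qhat N ω) = Q} ≤ 1 := fun N => prob_le_one
      have hlb : ∀ N, P {ω | QEquiv Q (Qhat N ω)} ≤ P {ω | f (Qhat N ω) = Q} :=
        fun N => measure_mono (hincl N)
      exact tendsto_of_tendsto_of_tendsto_of_le_of_le hcon1 tendsto_const_nhds hlb hub
  · -- conclusion 3
    intro Qbar hQbarMeas hQbarEquiv hQbarTendsto phat hphatMeas hphatMin ε hε
    obtain ⟨η, hηpos, hη⟩ := exists_eta Q c g p hcg hQcomp hp hdiv ε hε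
    have hincl3 : ∀ N, {ω | ε < eNorm (fun a => phat N ω a - p a)}
        ⊆ {ω | Qbar N ω ≠ Q} ∪ {ω | η/2 ≤ G N ω} := by
      intro N ω hω
      simp only [Set.mem_setOf_eq] at hω
      rw [Set.mem_union]
      by_contra hcon
      push_neg at hcon
      obtain ⟨hQeq, hGlt⟩ := hcon
      simp only [Set.mem_setOf_eq, not_le] at hQeq hGlt
      push_neg at hQeq
      obtain ⟨hphatPV, hphatLe⟩ := hphatMin N ω
      have h1 : eNorm (Umat c g Q *ᵥ phat N ω - betaVec (fun r => R r ω) N)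
          ≤ eNorm (Umat c g Q *ᵥ p - betaVec (fun r => R r ω) N) := by
        have h1' := hphatLe p hp
        rwa [hQeq] at h1'
      have h2 : eNorm (Umat c g Q *ᵥ p - betaVec (fun r => R r ω) N) = G N ω := rfl
      have h3 : eNorm (Umat c g Q *ᵥ phat N ω - blim)
          ≤ eNorm (Umat c g Q *ᵥ phat N ω - betaVec (fun r => R r ω) N)
            + eNorm (betaVec (fun r => R r ω) N - blim) := eNorm_triangle' _ _ _
      have h4 : eNorm (betaVec (fun r => R r ω) N - blim) = G N ω := eNorm_sub_comm _ _
      have h5 : η ≤ eNorm (Umat c g Q *ᵥ phat N ω - blim) :=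
        hη (phat N ω) hphatPV (le_of_lt hω)
      linarith
    have hQbarM : ∀ N, MeasurableSet {ω | Qbar N ω = Q} := by
      intro N
      have h1 : {ω | Qbar N ω = Q} = Qbar N ⁻¹' {Q} := rfl
      rw [h1]
      exact hQbarMeas N (measurableSet_singleton Q)
    have hQbarNe : Tendsto (fun N => P {ω | Qbar N ω ≠ Q}) atTop (nhds 0) := by
      have heq : ∀ N, P {ω | Qbar N ω ≠ Q} = 1 - P {ω | Qbar N ω = Q} := by
        intro N
        rw [show {ω | Qbar N ω ≠ Q} = {ω | Qbar N ω = Q}ᶜ from rfl,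
          prob_compl_eq_one_sub (hQbarM N)]
      have h1 := ENNReal.Tendsto.sub
        (tendsto_const_nhds (x := (1 : ENNReal))) hQbarTendsto
        (Or.inl ENNReal.one_ne_top)
      simp only [tsub_self] at h1
      simpa only [heq] using h1
    have hsum := Filter.Tendsto.add hQbarNe (hGP (η/2) (by linarith))
    rw [add_zero] at hsum
    have hub : ∀ N, P {ω | ε < eNorm (fun a => phat N ω a - p a)}
        ≤ P {ω | Qbar N ω ≠ Q} + P {ω | η/2 ≤ G N ω} := by
      intro N
      exact le_trans (measure_mono (hincl3 N)) (measure_union_le _ _)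
    exact tendsto_of_tendsto_of_tendsto_of_le_of_le tendsto_const_nhds hsum
      (fun N => zero_le) hub

end QMatrix
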